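/- arXiv:1409.0338 — 2 statements merged into one kernel-verified Lean document; each statement's English description precedes it below -/
import Mathlib

section
/- With the notation of generalized majorization (partitions a of length n, b of length m, c of length m+n), if c ≺ (b,a) holds, then c_{h_n+i} = b_{h_n−n+i} for all i = 1,...,m+n−h_n, where h_n = min{ i : b_{i−n+1} < c_i }. -/
/-- `a` is a partition with (at most) `n` parts `a 1 ≥ a 2 ≥ ... ≥ a n ≥ 0`
(values of `a` outside `{1, ..., n}` are irrelevant). -/
def IsPartOn (a : ℕ → ℤ) (n : ℕ) : Prop :=
  (∀ i, 1 ≤ i → i ≤ n → 0 ≤ a i) ∧ ∀ i, 1 ≤ i → i + 1 ≤ n → a (i + 1) ≤ a i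

/-- The extension of a partition `b = (b 1, ..., b m)` by `+∞` for indices `≤ 0`
and by `-∞` for indices `> m`. -/
noncomputable def extSeq (b : ℕ → ℤ) (m : ℕ) : ℤ → EReal := fun i =>
  if i ≤ 0 then ⊤ else if i ≤ (m : ℤ) then (((b i.toNat : ℤ) : ℝ) : EReal) else ⊥

/-- `hIdx b c m n q` is `h_q = min { i | b (i - q + 1) < c i }`, with the conventions
`b i = +∞` for `i ≤ 0`, `b i = -∞` for `i > m`, `c i = -∞` for `i > m + n`. -/
noncomputable def hIdx (b c : ℕ → ℤ) (m n q : ℕ) : ℕ :=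
  sInf { i : ℕ | extSeq b m ((i : ℤ) - q + 1) < extSeq c (m + n) i }

/-- `csum a t = a 1 + a 2 + ... + a t`. -/
def csum (a : ℕ → ℤ) (t : ℕ) : ℤ := ∑ i ∈ Finset.Icc 1 t, a i

/-- `Ssum b c m n q = Σ_{i=1}^{h_q} c i - Σ_{i=1}^{h_q - q} b i` (and `0` for `q = 0`),
so that `x 1 + ... + x q = Ssum b c m n q`. -/
noncomputable def Ssum (b c : ℕ → ℤ) (m n q : ℕ) : ℤ :=
  if q = 0 then 0 else csum c (hIdx b c m n q) - csum b (hIdx b c m n q - q)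

/-- The sequence `x` defined by `x 1 = Σ_{i=1}^{h_1} c i - Σ_{i=1}^{h_1 - 1} b i` and
`x q = Σ_{i=1}^{h_q} c i - Σ_{i=1}^{h_q - q} b i - x 1 - ... - x (q-1)`. -/
noncomputable def xSeq (b c : ℕ → ℤ) (m n q : ℕ) : ℤ :=
  Ssum b c m n q - Ssum b c m n (q - 1)

/-- Dominance ordering `x ≼ a` for sequences of length `n` (equal sums and all
partial-sum inequalities). -/
def DomOn (x a : ℕ → ℤ) (n : ℕ) : Prop :=
  (∀ j, 1 ≤ j → j ≤ n → csum x j ≤ csum a j) ∧ csum x n = csum a n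

/-- Generalized majorization `c ≺ (b, a)`, where `a` has `n` parts, `b` has `m` parts
and `c` has `m + n` parts. -/
noncomputable def GenMaj (c b a : ℕ → ℤ) (m n : ℕ) : Prop :=
  (∀ i, 1 ≤ i → i ≤ m → c (i + n) ≤ b i) ∧
  csum b m + csum a n = csum c (m + n) ∧
  ∀ q, 1 ≤ q → q ≤ n →
    csum c (hIdx b c m n q) - csum b (hIdx b c m n q - q) ≤ csum a q

/-- Elementary generalized majorization `d ≺₁ (e, a1)`, where `e` has `m` parts and
`d` has `m + 1` parts. -/
noncomputable def ElemGenMaj (d e : ℕ → ℤ) (a1 : ℤ) (m : ℕ) : Prop :=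
  (∀ i, 1 ≤ i → i ≤ m → d (i + 1) ≤ e i) ∧
  csum e m + a1 = csum d (m + 1) ∧
  ∀ i, hIdx e d m 1 1 ≤ i → i ≤ m → e i = d (i + 1)


lemma csum_succ' (a : ℕ → ℤ) (t : ℕ) : csum a (t + 1) = csum a t + a (t + 1) := by
  unfold csum
  rw [Finset.sum_Icc_succ_top (by omega)]

lemma csum_shift (a : ℕ → ℤ) (k t : ℕ) :
    csum a (k + t) = csum a k + ∑ i ∈ Finset.Icc 1 t, a (k + i) := by
  induction t with
  | zero => simp [csum]
  | succ t ih =>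
    rw [show k + (t + 1) = (k + t) + 1 from rfl, csum_succ', ih,
      Finset.sum_Icc_succ_top (by omega), Nat.add_assoc]
    ring

/-- if `c ≺ (b, a)` then `c (h_n + i) = b (h_n - n + i)` for
`i = 1, ..., m + n - h_n`. -/
theorem genMaj_tail_eq (a b c : ℕ → ℤ) (m n : ℕ)
    (ha : IsPartOn a n) (hb : IsPartOn b m) (hc : IsPartOn c (m + n))
    (h : GenMaj c b a m n) :
    ∀ i, 1 ≤ i → i ≤ m + n - hIdx b c m n n →
      c (hIdx b c m n n + i) = b (hIdx b c m n n - n + i) := by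
  intro i hi1 hi2
  set H := hIdx b c m n n with hH
  have hlt : H < m + n := by omega
  have hmem : (m + n) ∈ {i : ℕ | extSeq b m ((i : ℤ) - n + 1) < extSeq c (m + n) i} := by
    simp only [Set.mem_setOf_eq, extSeq]
    rw [if_neg (by push_cast; omega), if_neg (by push_cast; omega),
      if_neg (by push_cast; omega), if_pos (by push_cast; omega)]
    exact EReal.bot_lt_coe _
  have hne : {i : ℕ | extSeq b m ((i : ℤ) - n + 1) < extSeq c (m + n) i}.Nonempty := ⟨_, hmem⟩
  have hHmem : H ∈ {i : ℕ | extSeq b m ((i : ℤ) - n + 1) < extSeq c (m + n) i} := by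
    rw [hH]; exact Nat.sInf_mem hne
  have hHn : n ≤ H := by
    by_contra hcon
    push_neg at hcon
    have h2 := hHmem
    simp only [Set.mem_setOf_eq, extSeq] at h2
    rw [if_pos (by push_cast; omega)] at h2
    exact not_top_lt h2
  have key : csum c H - csum b (H - n) ≤ csum a n := by
    rcases Nat.eq_zero_or_pos n with hn0 | hn1
    · subst hn0
      have ha0 : csum a 0 = 0 := by simp [csum]
      rw [ha0]
      have : csum c H ≤ csum b (H - 0) := by
        simp only [Nat.sub_zero]
        unfold csum
        apply Finset.sum_le_sum
        intro j hj
        simp only [Finset.mem_Icc] at hj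
        have := h.1 j (by omega) (by omega)
        simpa using this
      omega
    · exact h.2.2 n hn1 le_rfl
  set p := H - n with hp
  set L := m + n - H with hL
  have hpL : p + L = m := by omega
  have hHL : H + L = m + n := by omega
  have hsum_b : ∑ j ∈ Finset.Icc 1 L, b (p + j) = csum b m - csum b p := by
    have h1 := csum_shift b p L
    rw [hpL] at h1
    omega
  have hsum_c : ∑ j ∈ Finset.Icc 1 L, c (H + j) = csum c (m + n) - csum c H := by
    have h1 := csum_shift c H L
    rw [hHL] at h1
    omega
  have hterm : ∀ j ∈ Finset.Icc 1 L, 0 ≤ b (p + j) - c (H + j) := by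
    intro j hj
    simp only [Finset.mem_Icc] at hj
    have h1 := h.1 (p + j) (by omega) (by omega)
    have h2 : p + j + n = H + j := by omega
    rw [h2] at h1
    omega
  have hsum0 : ∑ j ∈ Finset.Icc 1 L, (b (p + j) - c (H + j)) = 0 := by
    have hge : 0 ≤ ∑ j ∈ Finset.Icc 1 L, (b (p + j) - c (H + j)) :=
      Finset.sum_nonneg hterm
    have hle : ∑ j ∈ Finset.Icc 1 L, (b (p + j) - c (H + j)) ≤ 0 := by
      rw [Finset.sum_sub_distrib, hsum_b, hsum_c]
      have h1 := h.2.1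
      omega
    omega
  have hzero := (Finset.sum_eq_zero_iff_of_nonneg hterm).mp hsum0 i
    (Finset.mem_Icc.mpr ⟨hi1, hi2⟩)
  omega
end

section
/- For partitions c = (c_1,...,c_{m+1}) and b = (b_1,...,b_m) and an integer a_1 ≥ 0 (the case n = 1), the generalized majorization c ≺ (b, (a_1)) holds if and only if: b_i ≥ c_{i+1} for i = 1,...,m; Σ_{i=1}^{m} b_i + a_1 = Σ_{i=1}^{m+1} c_i; and b_i = c_{i+1} for all i ≥ h_1, where h_1 := min{ i : b_i < c_i } (with conventions b_i = −∞ for i > m, c_i = −∞ for i > m+1). -/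
lemma csum_sub_aux (f : ℕ → ℤ) {s t : ℕ} (h : s ≤ t) :
    csum f t - csum f s = ∑ i ∈ Finset.Ioc s t, f i := by
  have h0 : csum f s + ∑ i ∈ Finset.Ioc s t, f i = csum f t := by
    unfold csum
    rw [show Finset.Icc 1 s = Finset.Ioc 0 s from Finset.Icc_add_one_left_eq_Ioc 0 s,
        show Finset.Icc 1 t = Finset.Ioc 0 t from Finset.Icc_add_one_left_eq_Ioc 0 t]
    exact Finset.sum_Ioc_consecutive f (Nat.zero_le s) h
  linarith

lemma hIdx_mem_top (b c : ℕ → ℤ) (m : ℕ) :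
    (m + 1) ∈ { i : ℕ | extSeq b m ((i : ℤ) - 1 + 1) < extSeq c (m + 1) i } := by
  simp only [Set.mem_setOf_eq, extSeq]
  have e1 : ((m + 1 : ℕ) : ℤ) - 1 + 1 = (m : ℤ) + 1 := by push_cast; ring
  rw [e1]
  have h1 : ¬ ((m : ℤ) + 1 ≤ 0) := by push_cast; omega
  have h2 : ¬ ((m : ℤ) + 1 ≤ (m : ℤ)) := by omega
  have h3 : ¬ (((m + 1 : ℕ) : ℤ) ≤ 0) := by push_cast; omega
  have h4 : ((m + 1 : ℕ) : ℤ) ≤ ((m + 1 : ℕ) : ℤ) := le_refl _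
  rw [if_neg h1, if_neg h2, if_neg h3, if_pos h4]
  exact EReal.bot_lt_coe _

lemma hIdx_pos (b c : ℕ → ℤ) (m : ℕ) : 1 ≤ hIdx b c m 1 1 := by
  unfold hIdx
  simp only [Nat.cast_one]
  have hne : { i : ℕ | extSeq b m ((i : ℤ) - 1 + 1) < extSeq c (m + 1) i }.Nonempty :=
    ⟨m + 1, hIdx_mem_top b c m⟩
  have hmem := Nat.sInf_mem hne
  rcases Nat.eq_zero_or_pos
      (sInf { i : ℕ | extSeq b m ((i : ℤ) - 1 + 1) < extSeq c (m + 1) i }) with h0 | h0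
  · rw [h0] at hmem
    simp only [Set.mem_setOf_eq, extSeq] at hmem
    norm_num at hmem
  · exact h0

lemma hIdx_le (b c : ℕ → ℤ) (m : ℕ) : hIdx b c m 1 1 ≤ m + 1 := by
  unfold hIdx
  simp only [Nat.cast_one]
  exact Nat.sInf_le (hIdx_mem_top b c m)

/-- the case `n = 1` of generalized majorization (elementary
generalized majorization). -/
theorem genMaj_one_iff_elementary (b c : ℕ → ℤ) (a1 : ℤ) (m : ℕ)
    (hb : IsPartOn b m) (hc : IsPartOn c (m + 1)) (ha1 : 0 ≤ a1) :
    GenMaj c b (fun _ => a1) m 1 ↔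
      ((∀ i, 1 ≤ i → i ≤ m → c (i + 1) ≤ b i) ∧
       csum b m + a1 = csum c (m + 1) ∧
       ∀ i, hIdx b c m 1 1 ≤ i → i ≤ m → b i = c (i + 1)) := by
  have h1 : 1 ≤ hIdx b c m 1 1 := hIdx_pos b c m
  have h2 : hIdx b c m 1 1 ≤ m + 1 := hIdx_le b c m
  set h := hIdx b c m 1 1 with hh
  have hca : csum (fun _ => a1) 1 = a1 := by simp [csum]
  have hre : ∑ i ∈ Finset.Ioc h (m + 1), c i = ∑ i ∈ Finset.Ioc (h - 1) m, c (i + 1) := by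
    rw [show Finset.Ioc h (m + 1) =
        Finset.map (addRightEmbedding 1) (Finset.Ioc (h - 1) m) from ?_]
    · rw [Finset.sum_map]
      rfl
    · rw [Finset.map_add_right_Ioc]
      congr 1
      omega
  have hc1 : csum c (m + 1) - csum c h = ∑ i ∈ Finset.Ioc (h - 1) m, c (i + 1) := by
    rw [csum_sub_aux c h2, hre]
  have hb1 : csum b m - csum b (h - 1) = ∑ i ∈ Finset.Ioc (h - 1) m, b i :=
    csum_sub_aux b (by omega)
  have hmemIoc : ∀ i, i ∈ Finset.Ioc (h - 1) m ↔ (h ≤ i ∧ i ≤ m) := by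
    intro i
    rw [Finset.mem_Ioc]
    omega
  constructor
  · rintro ⟨H1, H2, H3⟩
    rw [hca] at H2
    have H3' := H3 1 le_rfl le_rfl
    rw [hca] at H3'
    simp only [← hh] at H3'
    -- H3' : csum c h - csum b (h - 1) ≤ a1
    have hle : ∑ i ∈ Finset.Ioc (h - 1) m, b i ≤ ∑ i ∈ Finset.Ioc (h - 1) m, c (i + 1) := by
      linarith
    have hge : ∑ i ∈ Finset.Ioc (h - 1) m, c (i + 1) ≤ ∑ i ∈ Finset.Ioc (h - 1) m, b i :=
      Finset.sum_le_sum (fun i hi => H1 i (by have := (hmemIoc i).1 hi; omega)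
        ((hmemIoc i).1 hi).2)
    have heq : ∑ i ∈ Finset.Ioc (h - 1) m, c (i + 1) = ∑ i ∈ Finset.Ioc (h - 1) m, b i :=
      le_antisymm hge hle
    refine ⟨H1, H2, fun i hhi him => ?_⟩
    have := (Finset.sum_eq_sum_iff_of_le (fun i hi => H1 i
      (by have := (hmemIoc i).1 hi; omega) ((hmemIoc i).1 hi).2)).1 heq i
      ((hmemIoc i).2 ⟨hhi, him⟩)
    omega
  · rintro ⟨H1, H2, H3⟩
    refine ⟨H1, by rw [hca]; exact H2, fun q hq1 hq2 => ?_⟩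
    have hq : q = 1 := le_antisymm hq2 hq1
    subst hq
    rw [hca]
    simp only [← hh]
    have heq : ∑ i ∈ Finset.Ioc (h - 1) m, b i = ∑ i ∈ Finset.Ioc (h - 1) m, c (i + 1) :=
      Finset.sum_congr rfl (fun i hi => H3 i ((hmemIoc i).1 hi).1 ((hmemIoc i).1 hi).2)
    linarith
end
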